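/- In the multiplex state diagram with b = 3 and m = 2, the number of closed walks of length n at state ⟨2,1⟩ satisfies a(n) = 8a(n−1) − 13a(n−2) for n ≥ 4, with a(1) = 1, a(2) = 4, a(3) = 22, giving the sequence 1, 4, 22, 124, 706, 4036, .... -/

import Mathlib

set_option maxHeartbeats 1000000
set_option linter.unusedVariables false
set_option linter.unreachableTactic false
set_option linter.unusedTactic false

namespace Multiplex

noncomputable abbrev St : ℕ →₀ ℕ := Finsupp.single 0 2 + Finsupp.single 1 1

def Ok (g : ℕ →₀ ℕ) : Prop := (∀ i, g i ≤ 2) ∧ g.sum (fun _ x => x) = 3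
def Edge (f g : ℕ →₀ ℕ) : Prop := ∀ i, f (i + 1) ≤ g i

def Walks (n : ℕ) (t : ℕ →₀ ℕ) : Set (Fin (n + 1) → (ℕ →₀ ℕ)) :=
  {f | f 0 = St ∧ f (Fin.last n) = t ∧
    (∀ k, (∀ i, f k i ≤ 2) ∧ (f k).sum (fun _ x => x) = 3) ∧
    (∀ k : Fin n, ∀ i, f k.castSucc (i + 1) ≤ f k.succ i)}

noncomputable def W (n : ℕ) (t : ℕ →₀ ℕ) : ℕ := (Walks n t).ncard

noncomputable def D (p q : ℕ) : ℕ →₀ ℕ := Finsupp.single p 2 + Finsupp.single q 1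
noncomputable def T (p q r : ℕ) : ℕ →₀ ℕ :=
  Finsupp.single p 1 + Finsupp.single q 1 + Finsupp.single r 1

lemma D_apply (p q j : ℕ) : D p q j = (if p = j then 2 else 0) + (if q = j then 1 else 0) := by
  simp [D, Finsupp.single_apply]

lemma T_apply (p q r j : ℕ) :
    T p q r j = (if p = j then 1 else 0) + (if q = j then 1 else 0) + (if r = j then 1 else 0) := by
  simp [T, Finsupp.single_apply]

lemma sum_two (x y a b : ℕ) :
    (Finsupp.single x a + Finsupp.single y b).sum (fun _ v => v) = a + b := by
  rw [Finsupp.sum_add_index' (fun _ => rfl) (fun _ _ _ => rfl),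
    Finsupp.sum_single_index rfl, Finsupp.sum_single_index rfl]

lemma sum_three (x y z a b c : ℕ) :
    (Finsupp.single x a + Finsupp.single y b + Finsupp.single z c).sum (fun _ v => v)
      = a + b + c := by
  rw [Finsupp.sum_add_index' (fun _ => rfl) (fun _ _ _ => rfl), sum_two,
    Finsupp.sum_single_index rfl]

lemma sum_four (x y z w a b c d : ℕ) :
    (Finsupp.single x a + Finsupp.single y b + Finsupp.single z c +
      Finsupp.single w d).sum (fun _ v => v) = a + b + c + d := by
  rw [Finsupp.sum_add_index' (fun _ => rfl) (fun _ _ _ => rfl), sum_three,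
    Finsupp.sum_single_index rfl]

lemma okD {p q : ℕ} (h : p ≠ q) : Ok (D p q) := by
  refine ⟨fun i => ?_, by simp [D, sum_two]⟩
  rw [D_apply]; split_ifs <;> omega

lemma okT {p q r : ℕ} (hpq : p ≠ q) (hpr : p ≠ r) (hqr : q ≠ r) : Ok (T p q r) := by
  refine ⟨fun i => ?_, by simp [T, sum_three]⟩
  rw [T_apply]; split_ifs <;> omega

lemma okSt : Ok St := okD (by omega)

/-! ### Finiteness -/

lemma finite_bounded (N : ℕ) :
    {g : ℕ →₀ ℕ | (∀ i, g i ≤ 2) ∧ ∀ j, g j ≠ 0 → j < N}.Finite := by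
  have hsub : {g : ℕ →₀ ℕ | (∀ i, g i ≤ 2) ∧ ∀ j, g j ≠ 0 → j < N} ⊆
      Set.range (fun v : Fin N → Fin 3 => ∑ i : Fin N, Finsupp.single (i : ℕ) ((v i : ℕ))) := by
    rintro g ⟨hle, hsup⟩
    refine ⟨fun i => ⟨g i, lt_of_le_of_lt (hle i) (by norm_num)⟩, ?_⟩
    ext j
    rw [Finsupp.finset_sum_apply]
    by_cases hj : j < N
    · rw [Finset.sum_eq_single (⟨j, hj⟩ : Fin N)]
      · simp [Finsupp.single_apply]
      · intro i _ hne
        rw [Finsupp.single_apply, if_neg]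
        intro h; exact hne (Fin.ext h)
      · simp
    · have : g j = 0 := by_contra fun h => hj (hsup j h)
      rw [this, Finset.sum_eq_zero]
      intro i _
      rw [Finsupp.single_apply, if_neg]
      omega
  exact (Set.finite_range _).subset hsub

lemma walks_chain {n : ℕ} {t : ℕ →₀ ℕ} {f : Fin (n+1) → (ℕ →₀ ℕ)} (hf : f ∈ Walks n t) :
    ∀ m, m ≤ n → ∀ j, f ⟨n - m, by omega⟩ (j + m) ≤ t j := by
  obtain ⟨h0, hl, hOk, hE⟩ := hf
  intro m
  induction m with
  | zero =>
    intro _ j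
    have h : (⟨n - 0, by omega⟩ : Fin (n+1)) = Fin.last n := by
      apply Fin.ext; simp
    rw [h, hl]; simp
  | succ m ih =>
    intro hm j
    have hmn : m ≤ n := by omega
    have hk : n - (m+1) < n := by omega
    have he := hE ⟨n - (m+1), hk⟩ (j + m)
    have e1 : (Fin.castSucc ⟨n - (m+1), hk⟩ : Fin (n+1)) = ⟨n - (m+1), by omega⟩ := rfl
    have e2 : (Fin.succ ⟨n - (m+1), hk⟩ : Fin (n+1)) = ⟨n - m, by omega⟩ := by
      apply Fin.ext; simp; omega
    rw [e1, e2] at he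
    calc f ⟨n - (m+1), by omega⟩ (j + (m+1)) = f ⟨n - (m+1), by omega⟩ ((j + m) + 1) := by
          ring_nf
      _ ≤ f ⟨n - m, by omega⟩ (j + m) := he
      _ ≤ t j := ih hmn j

lemma walks_finite (n : ℕ) (t : ℕ →₀ ℕ) : (Walks n t).Finite := by
  set M := t.support.sup id + 1 with hM
  have ht0 : ∀ j, M ≤ j → t j = 0 := by
    intro j hj
    by_contra h
    have h1 : j ∈ t.support := Finsupp.mem_support_iff.2 h
    have h2 := Finset.le_sup (f := id) h1
    simp only [id] at h2
    omega
  have hsub : Walks n t ⊆ Set.pi Set.univ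
      (fun _ : Fin (n+1) => {g : ℕ →₀ ℕ | (∀ i, g i ≤ 2) ∧ ∀ j, g j ≠ 0 → j < n + M}) := by
    intro f hf
    intro k _
    refine ⟨(hf.2.2.1 k).1, fun j hj => ?_⟩
    by_contra hjN
    push_neg at hjN
    have hkn : (k : ℕ) ≤ n := by omega
    have hchain := walks_chain hf (n - k) (by omega) (j - (n - k))
    have hk : (⟨n - (n - (k : ℕ)), by omega⟩ : Fin (n+1)) = k := by
      apply Fin.ext; simp; omega
    rw [hk] at hchain
    have hje : j - (n - (k:ℕ)) + (n - (k:ℕ)) = j := by omega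
    rw [hje] at hchain
    have h0 : t (j - (n - (k:ℕ))) = 0 := ht0 _ (by omega)
    rw [h0] at hchain
    omega
  exact (Set.Finite.pi (fun _ => finite_bounded (n + M))).subset hsub

/-! ### One-step walks -/

lemma walks_one_eq {g : ℕ →₀ ℕ} (hg : Ok g) (he : Edge St g) :
    Walks 1 g = {fun k : Fin 2 => if k = 0 then St else g} := by
  ext f
  constructor
  · rintro ⟨h0, hl, _, _⟩
    funext k
    match k with
    | (0 : Fin 2) => simpa using h0
    | (1 : Fin 2) => simpa using hl
  · rintro rfl
    refine ⟨by simp, by simp [Fin.last], fun k => ?_, fun k => ?_⟩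
    · match k with
      | (0 : Fin 2) => simpa [Ok] using okSt
      | (1 : Fin 2) => simpa [Ok] using hg
    · match k with
      | (0 : Fin 1) => simpa [Edge] using he

lemma walks_one_empty {g : ℕ →₀ ℕ} (hne : ¬ Edge St g) : Walks 1 g = ∅ := by
  ext f
  simp only [Set.mem_empty_iff_false, iff_false]
  rintro ⟨h0, hl, _, hE⟩
  exact hne (by have := hE 0; rwa [show (Fin.castSucc (0 : Fin 1)) = 0 from rfl, h0,
    show (Fin.succ (0 : Fin 1)) = Fin.last 1 from rfl, hl] at this)

lemma W_one {g : ℕ →₀ ℕ} (hg : Ok g) : W 1 g = if 1 ≤ g 0 then 1 else 0 := by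
  have hSt : Edge St g ↔ 1 ≤ g 0 := by
    constructor
    · intro h; have := h 0
      simpa [Finsupp.single_apply] using this
    · intro h i
      rcases i with _ | i
      · simpa [Finsupp.single_apply] using h
      · simp [Finsupp.single_apply]
  split_ifs with h
  · rw [W, walks_one_eq hg (hSt.2 h)]; simp
  · rw [W, walks_one_empty (fun he => h (hSt.1 he))]; simp

/-! ### The prefix bijection -/

def PWalks (n : ℕ) (t : ℕ →₀ ℕ) : Set (Fin (n + 1) → (ℕ →₀ ℕ)) :=
  {f | f 0 = St ∧ (∀ k, (∀ i, f k i ≤ 2) ∧ (f k).sum (fun _ x => x) = 3) ∧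
    (∀ k : Fin n, ∀ i, f k.castSucc (i + 1) ≤ f k.succ i) ∧ Edge (f (Fin.last n)) t}

lemma ncard_succ (n : ℕ) (t : ℕ →₀ ℕ) (ht : Ok t) :
    W (n + 1) t = (PWalks n t).ncard := by
  rw [W, show Walks (n+1) t = (fun f : Fin (n+1) → (ℕ →₀ ℕ) => Fin.snoc f t) '' PWalks n t from ?_,
    Set.ncard_image_of_injOn]
  · intro f _ f' _ h
    funext k
    have := congrFun h k.castSucc
    simpa only [Fin.snoc_castSucc] using this
  · ext f
    constructor
    · rintro ⟨h0, hl, hOk, hE⟩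
      refine ⟨fun k => f k.castSucc, ⟨?_, fun k => hOk _, fun k i => ?_, fun i => ?_⟩, ?_⟩
      · show f (Fin.castSucc 0) = St
        rwa [Fin.castSucc_zero]
      · have := hE k.castSucc i
        rwa [Fin.succ_castSucc] at this
      · have := hE (Fin.last n) i
        rwa [Fin.succ_last, hl] at this
      · funext k
        induction k using Fin.lastCases with
        | last => simp only [Fin.snoc_last, hl]
        | cast j => simp only [Fin.snoc_castSucc]
    · rintro ⟨g, ⟨h0, hOk, hE, hlast⟩, rfl⟩
      refine ⟨?_, by simp only [Fin.snoc_last], fun k => ?_, fun k i => ?_⟩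
      · simp only [show (0 : Fin (n+2)) = Fin.castSucc 0 from rfl, Fin.snoc_castSucc]
        exact h0
      · induction k using Fin.lastCases with
        | last => simp only [Fin.snoc_last]; exact ⟨ht.1, ht.2⟩
        | cast j => simp only [Fin.snoc_castSucc]; exact hOk j
      · induction k using Fin.lastCases with
        | last =>
          simp only [Fin.succ_last, Fin.snoc_last, Fin.snoc_castSucc]
          exact hlast i
        | cast j =>
          simp only [Fin.succ_castSucc, Fin.snoc_castSucc]
          exact hE j i

/-! ### Predecessor characterizations -/

lemma predD {p q : ℕ} (hpq : p ≠ q) (g : ℕ →₀ ℕ) :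
    (Ok g ∧ Edge g (D p q)) ↔
      (g = D 0 (q+1) ∨ g = D 0 (p+1) ∨ g = T 0 (p+1) (q+1) ∨ g = D (p+1) 0 ∨
        g = D (p+1) (q+1)) := by
  constructor
  · rintro ⟨⟨hle, hsum⟩, hedge⟩
    have hc : g (q+1) ≤ 1 := by
      have := hedge q
      rw [D_apply, if_neg hpq, if_pos rfl] at this
      omega
    have hz : ∀ j, j ≠ 0 → j ≠ p+1 → j ≠ q+1 → g j = 0 := by
      intro j h0 hp hq
      obtain ⟨i, rfl⟩ : ∃ i, j = i + 1 := ⟨j - 1, by omega⟩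
      have h1 := hedge i
      rw [D_apply, if_neg (by omega), if_neg (by omega)] at h1
      omega
    have hg : g = Finsupp.single 0 (g 0) + Finsupp.single (p+1) (g (p+1)) +
        Finsupp.single (q+1) (g (q+1)) := by
      ext j
      simp only [Finsupp.add_apply, Finsupp.single_apply]
      rcases eq_or_ne j 0 with rfl | h0
      · simp
      rcases eq_or_ne j (p+1) with rfl | hp
      · simp [Ne.symm h0, hpq.symm]
      rcases eq_or_ne j (q+1) with rfl | hq
      · simp [Ne.symm h0, hpq]
      · simp [Ne.symm h0, Ne.symm hp, Ne.symm hq, hz j h0 hp hq]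
    obtain ⟨a, b, c, ha2, hb2, hc1, rfl⟩ : ∃ a b c, a ≤ 2 ∧ b ≤ 2 ∧ c ≤ 1 ∧
        g = Finsupp.single 0 a + Finsupp.single (p+1) b + Finsupp.single (q+1) c :=
      ⟨g 0, g (p+1), g (q+1), hle 0, hle _, hc, hg⟩
    rw [sum_three] at hsum
    interval_cases a <;> interval_cases b <;> interval_cases c <;>
      first
        | (exfalso; omega)
        | simp [D, T, add_comm]
  · rintro (rfl | rfl | rfl | rfl | rfl) <;>
      refine ⟨⟨fun i => ?_, ?_⟩, fun i => ?_⟩ <;>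
        simp only [D, T, sum_two, sum_three, Finsupp.add_apply,
          Finsupp.single_apply] <;>
      first
        | (split_ifs <;> first | contradiction | omega)
        | omega

lemma predT {p q r : ℕ} (hpq : p ≠ q) (hpr : p ≠ r) (hqr : q ≠ r) (g : ℕ →₀ ℕ) :
    (Ok g ∧ Edge g (T p q r)) ↔
      (g = D 0 (p+1) ∨ g = D 0 (q+1) ∨ g = D 0 (r+1) ∨ g = T 0 (p+1) (q+1) ∨
        g = T 0 (p+1) (r+1) ∨ g = T 0 (q+1) (r+1) ∨ g = T (p+1) (q+1) (r+1)) := by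
  constructor
  · rintro ⟨⟨hle, hsum⟩, hedge⟩
    have hb : g (p+1) ≤ 1 := by
      have := hedge p
      rw [T_apply] at this
      split_ifs at this <;> first | contradiction | omega
    have hc : g (q+1) ≤ 1 := by
      have := hedge q
      rw [T_apply] at this
      split_ifs at this <;> first | contradiction | omega
    have hd : g (r+1) ≤ 1 := by
      have := hedge r
      rw [T_apply] at this
      split_ifs at this <;> first | contradiction | omega
    have hz : ∀ j, j ≠ 0 → j ≠ p+1 → j ≠ q+1 → j ≠ r+1 → g j = 0 := by
      intro j h0 hp hq hr
      obtain ⟨i, rfl⟩ : ∃ i, j = i + 1 := ⟨j - 1, by omega⟩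
      have h1 := hedge i
      rw [T_apply, if_neg (by omega), if_neg (by omega), if_neg (by omega)] at h1
      omega
    have hg : g = Finsupp.single 0 (g 0) + Finsupp.single (p+1) (g (p+1)) +
        Finsupp.single (q+1) (g (q+1)) + Finsupp.single (r+1) (g (r+1)) := by
      ext j
      simp only [Finsupp.add_apply, Finsupp.single_apply]
      rcases eq_or_ne j 0 with rfl | h0
      · simp
      rcases eq_or_ne j (p+1) with rfl | hp
      · simp [Ne.symm h0, hpq.symm, hpr.symm]
      rcases eq_or_ne j (q+1) with rfl | hq
      · simp [Ne.symm h0, hpq, hqr.symm]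
      rcases eq_or_ne j (r+1) with rfl | hr
      · simp [Ne.symm h0, hpr, hqr]
      · simp [Ne.symm h0, Ne.symm hp, Ne.symm hq, Ne.symm hr, hz j h0 hp hq hr]
    obtain ⟨a, b, c, d, ha2, hb1, hc1, hd1, rfl⟩ : ∃ a b c d, a ≤ 2 ∧ b ≤ 1 ∧ c ≤ 1 ∧ d ≤ 1 ∧
        g = Finsupp.single 0 a + Finsupp.single (p+1) b + Finsupp.single (q+1) c +
          Finsupp.single (r+1) d :=
      ⟨g 0, g (p+1), g (q+1), g (r+1), hle 0, hb, hc, hd, hg⟩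
    rw [sum_four] at hsum
    interval_cases a <;> interval_cases b <;> interval_cases c <;> interval_cases d <;>
      first
        | (exfalso; omega)
        | simp [D, T, add_comm]
  · rintro (rfl | rfl | rfl | rfl | rfl | rfl | rfl) <;>
      refine ⟨⟨fun i => ?_, ?_⟩, fun i => ?_⟩ <;>
        simp only [D, T, sum_two, sum_three, Finsupp.add_apply,
          Finsupp.single_apply] <;>
      first
        | (split_ifs <;> first | contradiction | omega)
        | omega

/-! ### Step lemmas -/

lemma walks_disjoint {n : ℕ} {g g' : ℕ →₀ ℕ} (h : g ≠ g') :
    Disjoint (Walks n g) (Walks n g') :=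
  Set.disjoint_left.2 fun f hf hf' => h (hf.2.1 ▸ hf'.2.1 ▸ rfl)

lemma walks_sub_pwalks {n : ℕ} {t g : ℕ →₀ ℕ} (he : Edge g t) :
    Walks n g ⊆ PWalks n t :=
  fun f hf => ⟨hf.1, hf.2.2.1, hf.2.2.2, hf.2.1 ▸ he⟩

lemma stepD {p q : ℕ} (hpq : p ≠ q) (m : ℕ) :
    W (m+1) (D p q) = W m (D 0 (q+1)) + W m (D 0 (p+1)) + W m (T 0 (p+1) (q+1)) +
      W m (D (p+1) 0) + W m (D (p+1) (q+1)) := by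
  have e1 : Edge (D 0 (q+1)) (D p q) := ((predD hpq _).2 (Or.inl rfl)).2
  have e2 : Edge (D 0 (p+1)) (D p q) := ((predD hpq _).2 (Or.inr (Or.inl rfl))).2
  have e3 : Edge (T 0 (p+1) (q+1)) (D p q) := ((predD hpq _).2 (Or.inr (Or.inr (Or.inl rfl)))).2
  have e4 : Edge (D (p+1) 0) (D p q) := ((predD hpq _).2 (Or.inr (Or.inr (Or.inr (Or.inl rfl))))).2
  have e5 : Edge (D (p+1) (q+1)) (D p q) := ((predD hpq _).2 (Or.inr (Or.inr (Or.inr (Or.inr rfl))))).2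
  have hset : PWalks m (D p q) = Walks m (D 0 (q+1)) ∪ Walks m (D 0 (p+1)) ∪
      Walks m (T 0 (p+1) (q+1)) ∪ Walks m (D (p+1) 0) ∪ Walks m (D (p+1) (q+1)) := by
    ext f
    constructor
    · rintro ⟨h0, hOk, hE, hlast⟩
      rcases (predD hpq (f (Fin.last m))).1 ⟨hOk _, hlast⟩ with h | h | h | h | h
      · exact Or.inl (Or.inl (Or.inl (Or.inl ⟨h0, h, hOk, hE⟩)))
      · exact Or.inl (Or.inl (Or.inl (Or.inr ⟨h0, h, hOk, hE⟩)))
      · exact Or.inl (Or.inl (Or.inr ⟨h0, h, hOk, hE⟩))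
      · exact Or.inl (Or.inr ⟨h0, h, hOk, hE⟩)
      · exact Or.inr ⟨h0, h, hOk, hE⟩
    · rintro ((((h | h) | h) | h) | h)
      exacts [walks_sub_pwalks e1 h, walks_sub_pwalks e2 h, walks_sub_pwalks e3 h,
        walks_sub_pwalks e4 h, walks_sub_pwalks e5 h]
  have n12 : D 0 (q+1) ≠ D 0 (p+1) := fun h => by
    have := DFunLike.congr_fun h (q+1)
    rw [D_apply, D_apply] at this
    split_ifs at this <;> first | contradiction | omega
  have n13 : D 0 (q+1) ≠ T 0 (p+1) (q+1) := fun h => by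
    have := DFunLike.congr_fun h 0
    rw [D_apply, T_apply] at this
    split_ifs at this <;> first | contradiction | omega
  have n14 : D 0 (q+1) ≠ D (p+1) 0 := fun h => by
    have := DFunLike.congr_fun h 0
    rw [D_apply, D_apply] at this
    split_ifs at this <;> first | contradiction | omega
  have n15 : D 0 (q+1) ≠ D (p+1) (q+1) := fun h => by
    have := DFunLike.congr_fun h 0
    rw [D_apply, D_apply] at this
    split_ifs at this <;> first | contradiction | omega
  have n23 : D 0 (p+1) ≠ T 0 (p+1) (q+1) := fun h => by
    have := DFunLike.congr_fun h 0
    rw [D_apply, T_apply] at this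
    split_ifs at this <;> first | contradiction | omega
  have n24 : D 0 (p+1) ≠ D (p+1) 0 := fun h => by
    have := DFunLike.congr_fun h 0
    rw [D_apply, D_apply] at this
    split_ifs at this <;> first | contradiction | omega
  have n25 : D 0 (p+1) ≠ D (p+1) (q+1) := fun h => by
    have := DFunLike.congr_fun h 0
    rw [D_apply, D_apply] at this
    split_ifs at this <;> first | contradiction | omega
  have n34 : T 0 (p+1) (q+1) ≠ D (p+1) 0 := fun h => by
    have := DFunLike.congr_fun h (p+1)
    rw [T_apply, D_apply] at this
    split_ifs at this <;> first | contradiction | omega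
  have n35 : T 0 (p+1) (q+1) ≠ D (p+1) (q+1) := fun h => by
    have := DFunLike.congr_fun h 0
    rw [T_apply, D_apply] at this
    split_ifs at this <;> first | contradiction | omega
  have n45 : D (p+1) 0 ≠ D (p+1) (q+1) := fun h => by
    have := DFunLike.congr_fun h 0
    rw [D_apply, D_apply] at this
    split_ifs at this <;> first | contradiction | omega
  have f1 := walks_finite m (D 0 (q+1))
  have f2 := walks_finite m (D 0 (p+1))
  have f3 := walks_finite m (T 0 (p+1) (q+1))
  have f4 := walks_finite m (D (p+1) 0)
  have f5 := walks_finite m (D (p+1) (q+1))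
  rw [ncard_succ m (D p q) (okD hpq), hset]
  rw [Set.ncard_union_eq (by
      exact ((((walks_disjoint n15).union_left (walks_disjoint n25)).union_left
        (walks_disjoint n35)).union_left (walks_disjoint n45)))
    (((f1.union f2).union f3).union f4) f5]
  rw [Set.ncard_union_eq (by
      exact (((walks_disjoint n14).union_left (walks_disjoint n24)).union_left
        (walks_disjoint n34)))
    ((f1.union f2).union f3) f4]
  rw [Set.ncard_union_eq (by
      exact ((walks_disjoint n13).union_left (walks_disjoint n23)))
    (f1.union f2) f3]
  rw [Set.ncard_union_eq (walks_disjoint n12) f1 f2]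
  rfl

lemma stepT {p q r : ℕ} (hpq : p ≠ q) (hpr : p ≠ r) (hqr : q ≠ r) (m : ℕ) :
    W (m+1) (T p q r) = W m (D 0 (p+1)) + W m (D 0 (q+1)) + W m (D 0 (r+1)) +
      W m (T 0 (p+1) (q+1)) + W m (T 0 (p+1) (r+1)) + W m (T 0 (q+1) (r+1)) +
      W m (T (p+1) (q+1) (r+1)) := by
  have e1 : Edge (D 0 (p+1)) (T p q r) := ((predT hpq hpr hqr _).2 (Or.inl rfl)).2
  have e2 : Edge (D 0 (q+1)) (T p q r) := ((predT hpq hpr hqr _).2 (Or.inr (Or.inl rfl))).2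
  have e3 : Edge (D 0 (r+1)) (T p q r) := ((predT hpq hpr hqr _).2 (Or.inr (Or.inr (Or.inl rfl)))).2
  have e4 : Edge (T 0 (p+1) (q+1)) (T p q r) := ((predT hpq hpr hqr _).2 (Or.inr (Or.inr (Or.inr (Or.inl rfl))))).2
  have e5 : Edge (T 0 (p+1) (r+1)) (T p q r) := ((predT hpq hpr hqr _).2 (Or.inr (Or.inr (Or.inr (Or.inr (Or.inl rfl)))))).2
  have e6 : Edge (T 0 (q+1) (r+1)) (T p q r) := ((predT hpq hpr hqr _).2 (Or.inr (Or.inr (Or.inr (Or.inr (Or.inr (Or.inl rfl))))))).2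
  have e7 : Edge (T (p+1) (q+1) (r+1)) (T p q r) := ((predT hpq hpr hqr _).2 (Or.inr (Or.inr (Or.inr (Or.inr (Or.inr (Or.inr rfl))))))).2
  have hset : PWalks m (T p q r) = Walks m (D 0 (p+1)) ∪ Walks m (D 0 (q+1)) ∪
      Walks m (D 0 (r+1)) ∪ Walks m (T 0 (p+1) (q+1)) ∪ Walks m (T 0 (p+1) (r+1)) ∪
      Walks m (T 0 (q+1) (r+1)) ∪ Walks m (T (p+1) (q+1) (r+1)) := by
    ext f
    constructor
    · rintro ⟨h0, hOk, hE, hlast⟩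
      rcases (predT hpq hpr hqr (f (Fin.last m))).1 ⟨hOk _, hlast⟩ with
        h | h | h | h | h | h | h
      · exact Or.inl (Or.inl (Or.inl (Or.inl (Or.inl (Or.inl ⟨h0, h, hOk, hE⟩)))))
      · exact Or.inl (Or.inl (Or.inl (Or.inl (Or.inl (Or.inr ⟨h0, h, hOk, hE⟩)))))
      · exact Or.inl (Or.inl (Or.inl (Or.inl (Or.inr ⟨h0, h, hOk, hE⟩))))
      · exact Or.inl (Or.inl (Or.inl (Or.inr ⟨h0, h, hOk, hE⟩)))
      · exact Or.inl (Or.inl (Or.inr ⟨h0, h, hOk, hE⟩))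
      · exact Or.inl (Or.inr ⟨h0, h, hOk, hE⟩)
      · exact Or.inr ⟨h0, h, hOk, hE⟩
    · rintro ((((((h | h) | h) | h) | h) | h) | h)
      exacts [walks_sub_pwalks e1 h, walks_sub_pwalks e2 h, walks_sub_pwalks e3 h,
        walks_sub_pwalks e4 h, walks_sub_pwalks e5 h, walks_sub_pwalks e6 h,
        walks_sub_pwalks e7 h]
  have key : ∀ x y : ℕ →₀ ℕ, ∀ j : ℕ, x j ≠ y j → x ≠ y := by
    intro x y j hxy h
    exact hxy (DFunLike.congr_fun h j)
  have n12 : D 0 (p+1) ≠ D 0 (q+1) := key _ _ (p+1) (by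
    rw [D_apply, D_apply]; split_ifs <;> first | contradiction | omega)
  have n13 : D 0 (p+1) ≠ D 0 (r+1) := key _ _ (p+1) (by
    rw [D_apply, D_apply]; split_ifs <;> first | contradiction | omega)
  have n14 : D 0 (p+1) ≠ T 0 (p+1) (q+1) := key _ _ 0 (by
    rw [D_apply, T_apply]; split_ifs <;> first | contradiction | omega)
  have n15 : D 0 (p+1) ≠ T 0 (p+1) (r+1) := key _ _ 0 (by
    rw [D_apply, T_apply]; split_ifs <;> first | contradiction | omega)
  have n16 : D 0 (p+1) ≠ T 0 (q+1) (r+1) := key _ _ 0 (by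
    rw [D_apply, T_apply]; split_ifs <;> first | contradiction | omega)
  have n17 : D 0 (p+1) ≠ T (p+1) (q+1) (r+1) := key _ _ 0 (by
    rw [D_apply, T_apply]; split_ifs <;> first | contradiction | omega)
  have n23 : D 0 (q+1) ≠ D 0 (r+1) := key _ _ (q+1) (by
    rw [D_apply, D_apply]; split_ifs <;> first | contradiction | omega)
  have n24 : D 0 (q+1) ≠ T 0 (p+1) (q+1) := key _ _ 0 (by
    rw [D_apply, T_apply]; split_ifs <;> first | contradiction | omega)
  have n25 : D 0 (q+1) ≠ T 0 (p+1) (r+1) := key _ _ 0 (by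
    rw [D_apply, T_apply]; split_ifs <;> first | contradiction | omega)
  have n26 : D 0 (q+1) ≠ T 0 (q+1) (r+1) := key _ _ 0 (by
    rw [D_apply, T_apply]; split_ifs <;> first | contradiction | omega)
  have n27 : D 0 (q+1) ≠ T (p+1) (q+1) (r+1) := key _ _ 0 (by
    rw [D_apply, T_apply]; split_ifs <;> first | contradiction | omega)
  have n34 : D 0 (r+1) ≠ T 0 (p+1) (q+1) := key _ _ 0 (by
    rw [D_apply, T_apply]; split_ifs <;> first | contradiction | omega)
  have n35 : D 0 (r+1) ≠ T 0 (p+1) (r+1) := key _ _ 0 (by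
    rw [D_apply, T_apply]; split_ifs <;> first | contradiction | omega)
  have n36 : D 0 (r+1) ≠ T 0 (q+1) (r+1) := key _ _ 0 (by
    rw [D_apply, T_apply]; split_ifs <;> first | contradiction | omega)
  have n37 : D 0 (r+1) ≠ T (p+1) (q+1) (r+1) := key _ _ 0 (by
    rw [D_apply, T_apply]; split_ifs <;> first | contradiction | omega)
  have n45 : T 0 (p+1) (q+1) ≠ T 0 (p+1) (r+1) := key _ _ (q+1) (by
    rw [T_apply, T_apply]; split_ifs <;> first | contradiction | omega)
  have n46 : T 0 (p+1) (q+1) ≠ T 0 (q+1) (r+1) := key _ _ (p+1) (by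
    rw [T_apply, T_apply]; split_ifs <;> first | contradiction | omega)
  have n47 : T 0 (p+1) (q+1) ≠ T (p+1) (q+1) (r+1) := key _ _ 0 (by
    rw [T_apply, T_apply]; split_ifs <;> first | contradiction | omega)
  have n56 : T 0 (p+1) (r+1) ≠ T 0 (q+1) (r+1) := key _ _ (p+1) (by
    rw [T_apply, T_apply]; split_ifs <;> first | contradiction | omega)
  have n57 : T 0 (p+1) (r+1) ≠ T (p+1) (q+1) (r+1) := key _ _ 0 (by
    rw [T_apply, T_apply]; split_ifs <;> first | contradiction | omega)
  have n67 : T 0 (q+1) (r+1) ≠ T (p+1) (q+1) (r+1) := key _ _ 0 (by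
    rw [T_apply, T_apply]; split_ifs <;> first | contradiction | omega)
  have f1 := walks_finite m (D 0 (p+1))
  have f2 := walks_finite m (D 0 (q+1))
  have f3 := walks_finite m (D 0 (r+1))
  have f4 := walks_finite m (T 0 (p+1) (q+1))
  have f5 := walks_finite m (T 0 (p+1) (r+1))
  have f6 := walks_finite m (T 0 (q+1) (r+1))
  have f7 := walks_finite m (T (p+1) (q+1) (r+1))
  rw [ncard_succ m (T p q r) (okT hpq hpr hqr), hset]
  rw [Set.ncard_union_eq (by
      exact (((((walks_disjoint n17).union_left (walks_disjoint n27)).union_left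
        (walks_disjoint n37)).union_left (walks_disjoint n47)).union_left
        (walks_disjoint n57)).union_left (walks_disjoint n67))
    (((((f1.union f2).union f3).union f4).union f5).union f6) f7]
  rw [Set.ncard_union_eq (by
      exact ((((walks_disjoint n16).union_left (walks_disjoint n26)).union_left
        (walks_disjoint n36)).union_left (walks_disjoint n46)).union_left
        (walks_disjoint n56))
    ((((f1.union f2).union f3).union f4).union f5) f6]
  rw [Set.ncard_union_eq (by
      exact (((walks_disjoint n15).union_left (walks_disjoint n25)).union_left
        (walks_disjoint n35)).union_left (walks_disjoint n45))
    (((f1.union f2).union f3).union f4) f5]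
  rw [Set.ncard_union_eq (by
      exact ((walks_disjoint n14).union_left (walks_disjoint n24)).union_left
        (walks_disjoint n34))
    ((f1.union f2).union f3) f4]
  rw [Set.ncard_union_eq (by
      exact (walks_disjoint n13).union_left (walks_disjoint n23))
    (f1.union f2) f3]
  rw [Set.ncard_union_eq (walks_disjoint n12) f1 f2]
  rfl

/-! ### Base values -/

lemma W1_D0 {m : ℕ} (hm : m ≠ 0) : W 1 (D 0 m) = 1 := by
  rw [W_one (okD (fun h => hm h.symm))]
  rw [D_apply]
  split_ifs <;> first | rfl | omega

lemma W1_Dleft (p : ℕ) : W 1 (D (p+1) 0) = 1 := by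
  rw [W_one (okD (by omega))]
  rw [D_apply]
  split_ifs <;> first | rfl | omega

lemma W1_T0 {x y : ℕ} (hx : x ≠ 0) (hy : y ≠ 0) (hxy : x ≠ y) : W 1 (T 0 x y) = 1 := by
  rw [W_one (okT (fun h => hx h.symm) (fun h => hy h.symm) hxy)]
  rw [T_apply]
  split_ifs <;> first | rfl | omega

lemma W1_Dhigh {x y : ℕ} (hx : x ≠ 0) (hy : y ≠ 0) (hxy : x ≠ y) : W 1 (D x y) = 0 := by
  rw [W_one (okD hxy)]
  rw [D_apply]
  split_ifs <;> first | rfl | omega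

lemma W1_Thigh {x y z : ℕ} (hx : x ≠ 0) (hy : y ≠ 0) (hz : z ≠ 0)
    (hxy : x ≠ y) (hxz : x ≠ z) (hyz : y ≠ z) : W 1 (T x y z) = 0 := by
  rw [W_one (okT hxy hxz hyz)]
  rw [T_apply]
  split_ifs <;> first | rfl | omega

/-! ### The lumped recursion -/

def AB : ℕ → ℕ × ℕ
  | 0 => (4, 6)
  | (k+1) => (4 * (AB k).1 + (AB k).2, 3 * (AB k).1 + 4 * (AB k).2)

lemma main (k : ℕ) :
    (∀ p q : ℕ, p ≠ q → W (k+2) (D p q) = (AB k).1) ∧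
      (∀ p q r : ℕ, p ≠ q → p ≠ r → q ≠ r → W (k+2) (T p q r) = (AB k).2) := by
  induction k with
  | zero =>
    constructor
    · intro p q hpq
      rw [show (0:ℕ)+2 = 1+1 from rfl, stepD hpq 1]
      rw [W1_D0 (by omega), W1_D0 (by omega), W1_T0 (by omega) (by omega) (by omega),
        W1_Dleft, W1_Dhigh (by omega) (by omega) (by omega)]
      rfl
    · intro p q r hpq hpr hqr
      rw [show (0:ℕ)+2 = 1+1 from rfl, stepT hpq hpr hqr 1]
      rw [W1_D0 (by omega), W1_D0 (by omega), W1_D0 (by omega),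
        W1_T0 (by omega) (by omega) (by omega), W1_T0 (by omega) (by omega) (by omega),
        W1_T0 (by omega) (by omega) (by omega),
        W1_Thigh (by omega) (by omega) (by omega) (by omega) (by omega) (by omega)]
      rfl
  | succ k ih =>
    constructor
    · intro p q hpq
      rw [show k+1+2 = (k+2)+1 from rfl, stepD hpq (k+2)]
      rw [ih.1 0 (q+1) (by omega), ih.1 0 (p+1) (by omega),
        ih.2 0 (p+1) (q+1) (by omega) (by omega) (by omega),
        ih.1 (p+1) 0 (by omega), ih.1 (p+1) (q+1) (by omega)]
      have h : (AB (k+1)).1 = 4 * (AB k).1 + (AB k).2 := rfl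
      omega
    · intro p q r hpq hpr hqr
      rw [show k+1+2 = (k+2)+1 from rfl, stepT hpq hpr hqr (k+2)]
      rw [ih.1 0 (p+1) (by omega), ih.1 0 (q+1) (by omega), ih.1 0 (r+1) (by omega),
        ih.2 0 (p+1) (q+1) (by omega) (by omega) (by omega),
        ih.2 0 (p+1) (r+1) (by omega) (by omega) (by omega),
        ih.2 0 (q+1) (r+1) (by omega) (by omega) (by omega),
        ih.2 (p+1) (q+1) (r+1) (by omega) (by omega) (by omega)]
      have h : (AB (k+1)).2 = 3 * (AB k).1 + 4 * (AB k).2 := rfl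
      omega

end Multiplex

open Multiplex in
theorem multiplex_b3_m2_recurrence
    (a : ℕ → ℕ)
    (ha : ∀ n, a n = {f : Fin (n + 1) → (ℕ →₀ ℕ) |
        f 0 = Finsupp.single 0 2 + Finsupp.single 1 1 ∧
        f (Fin.last n) = Finsupp.single 0 2 + Finsupp.single 1 1 ∧
        (∀ k, (∀ i, f k i ≤ 2) ∧ (f k).sum (fun _ x => x) = 3) ∧
        (∀ k : Fin n, ∀ i, f k.castSucc (i + 1) ≤ f k.succ i)}.ncard) :
    (∀ n ≥ 4, (a n : ℤ) = 8 * a (n - 1) - 13 * a (n - 2)) ∧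
      a 1 = 1 ∧ a 2 = 4 ∧ a 3 = 22 := by
  have hW : ∀ n, a n = W n (D 0 1) := ha
  have hA : ∀ k, a (k + 2) = (AB k).1 := fun k => by
    rw [hW, (main k).1 0 1 (by omega)]
  refine ⟨?_, ?_, ?_, ?_⟩
  · intro n hn
    obtain ⟨k, rfl⟩ : ∃ k, n = k + 4 := ⟨n - 4, by omega⟩
    have h1 : a (k + 4) = (AB (k+2)).1 := hA (k+2)
    have h2 : a (k + 4 - 1) = (AB (k+1)).1 := hA (k+1)
    have h3 : a (k + 4 - 2) = (AB k).1 := hA k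
    rw [h1, h2, h3]
    show ((4 * (AB (k+1)).1 + (3 * (AB k).1 + 4 * (AB k).2) : ℕ) : ℤ) = _
    have : (AB (k+1)).1 = 4 * (AB k).1 + (AB k).2 := rfl
    push_cast [this]
    ring
  · rw [hW, W1_D0 (by omega)]
  · exact hA 0
  · exact hA 1
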